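/- If π^1 ≠ π^2 are distinct tuples giving factorizations of 2l, then at any intersection point t of their conformal weights, the vectors (r_{π^1} t + s_{π^1}, 4 r_{π^1} t) and (r_{π^2} t + s_{π^2}, 4 r_{π^2} t) in ℝ² are linearly independent. -/

import Mathlib

lemma prod_pow_inj_eq {P : ℕ} (p : Fin P → ℕ) (hp : ∀ i, (p i).Prime)
    (hinj : Function.Injective p) (a b : Fin P → ℕ)
    (h : ∏ i, p i ^ a i = ∏ i, p i ^ b i) : a = b := by
  funext j
  have hfac : ∀ (c : Fin P → ℕ),
      (∏ i, p i ^ c i).factorization (p j) = c j := by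
    intro c
    rw [Nat.factorization_prod (fun i _ => pow_ne_zero _ (hp i).pos.ne')]
    have key : ∀ i : Fin P, (p i ^ c i).factorization (p j)
        = if i = j then c j else 0 := by
      intro i
      rw [Nat.Prime.factorization_pow (hp i), Finsupp.single_apply]
      by_cases hij : i = j
      · simp [hij]
      · simp only [hij, if_false, ite_eq_right_iff]
        exact fun h' => absurd (hinj h') hij
    rw [Finsupp.finset_sum_apply]
    rw [Finset.sum_congr rfl (fun i _ => key i)]
    simp
  have := hfac a
  rw [h, hfac b] at this
  exact this.symm

/-- At an intersection point `t = ±(1/2^n)∏ pᵢ^{nᵢ-kᵢ¹-kᵢ²}` of the conformal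
weights of two distinct tuples, the vectors `(r₁t+s₁, 4r₁t)` and
`(r₂t+s₂, 4r₂t)` are linearly independent. -/
theorem stmt_5 (n P : ℕ) (p e : Fin P → ℕ)
    (hn : 1 ≤ n)
    (hp : ∀ i, (p i).Prime) (hodd : ∀ i, Odd (p i))
    (hinj : Function.Injective p)
    (k1 k2 : Fin P → ℕ) (hk1 : ∀ i, k1 i ≤ e i) (hk2 : ∀ i, k2 i ≤ e i)
    (hne : k1 ≠ k2)
    (t : ℝ)
    (ht : t = ((2 : ℝ) ^ n)⁻¹ * ∏ i, (p i : ℝ) ^ ((e i : ℤ) - k1 i - k2 i)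
      ∨ t = -(((2 : ℝ) ^ n)⁻¹ * ∏ i, (p i : ℝ) ^ ((e i : ℤ) - k1 i - k2 i))) :
    (((2 ^ n * ∏ i, p i ^ k1 i : ℕ) : ℝ) * t
        + ((∏ i, p i ^ (e i - k1 i) : ℕ) : ℝ))
      * (4 * ((2 ^ n * ∏ i, p i ^ k2 i : ℕ) : ℝ) * t)
    - (((2 ^ n * ∏ i, p i ^ k2 i : ℕ) : ℝ) * t
        + ((∏ i, p i ^ (e i - k2 i) : ℕ) : ℝ))
      * (4 * ((2 ^ n * ∏ i, p i ^ k1 i : ℕ) : ℝ) * t) ≠ 0 := by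
  -- t ≠ 0
  have hprodpos : (0 : ℝ) < ∏ i, (p i : ℝ) ^ ((e i : ℤ) - k1 i - k2 i) := by
    apply Finset.prod_pos
    intro i _
    exact zpow_pos (by exact_mod_cast (hp i).pos) _
  have htne : t ≠ 0 := by
    have h2 : (0:ℝ) < ((2:ℝ)^n)⁻¹ := by positivity
    rcases ht with h | h <;> rw [h]
    · exact (mul_pos h2 hprodpos).ne'
    · exact (neg_neg_iff_pos.mpr (mul_pos h2 hprodpos)).ne
  -- s1 * r2 ≠ s2 * r1 in ℕ
  have hnat : (∏ i, p i ^ (e i - k1 i)) * (2 ^ n * ∏ i, p i ^ k2 i)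
      ≠ (∏ i, p i ^ (e i - k2 i)) * (2 ^ n * ∏ i, p i ^ k1 i) := by
    intro h
    have h2pos : 0 < 2 ^ n := Nat.pow_pos (by norm_num)
    have h' : (∏ i, p i ^ ((e i - k1 i) + k2 i))
        = ∏ i, p i ^ ((e i - k2 i) + k1 i) := by
      simp only [pow_add, Finset.prod_mul_distrib]
      apply Nat.eq_of_mul_eq_mul_left h2pos
      ring_nf
      ring_nf at h
      linarith [h]
    have := prod_pow_inj_eq p hp hinj _ _ h'
    apply hne
    funext i
    have hi := congrFun this i
    have := hk1 i; have := hk2 i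
    omega
  have hreal : ((∏ i, p i ^ (e i - k1 i) : ℕ) : ℝ) * ((2 ^ n * ∏ i, p i ^ k2 i : ℕ) : ℝ)
      - ((∏ i, p i ^ (e i - k2 i) : ℕ) : ℝ) * ((2 ^ n * ∏ i, p i ^ k1 i : ℕ) : ℝ) ≠ 0 := by
    rw [sub_ne_zero]
    exact_mod_cast hnat
  have key : (((2 ^ n * ∏ i, p i ^ k1 i : ℕ) : ℝ) * t
        + ((∏ i, p i ^ (e i - k1 i) : ℕ) : ℝ))
      * (4 * ((2 ^ n * ∏ i, p i ^ k2 i : ℕ) : ℝ) * t)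
    - (((2 ^ n * ∏ i, p i ^ k2 i : ℕ) : ℝ) * t
        + ((∏ i, p i ^ (e i - k2 i) : ℕ) : ℝ))
      * (4 * ((2 ^ n * ∏ i, p i ^ k1 i : ℕ) : ℝ) * t)
    = 4 * t * (((∏ i, p i ^ (e i - k1 i) : ℕ) : ℝ) * ((2 ^ n * ∏ i, p i ^ k2 i : ℕ) : ℝ)
      - ((∏ i, p i ^ (e i - k2 i) : ℕ) : ℝ) * ((2 ^ n * ∏ i, p i ^ k1 i : ℕ) : ℝ)) := by
    ring
  rw [key]
  exact mul_ne_zero (mul_ne_zero (by norm_num) htne) hreal
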